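/- Fix t, x ∈ ℝ. Let Φ̂⁰ : ℝ × ℝ → ℝ be such that for each p, the map x̂ ↦ Φ̂⁰(x̂, p) is Lipschitz in x̂ with Lipschitz constant at most 1/(2π), and let φ : ℝ → ℝ satisfy ∫|φ(q)|dq ≤ 2π with strict inequality, i.e. ∫|φ(q)|dq < 2π. Then the map F on the Banach space of bounded measurable functions Φ : ℝ → ℝ (sup norm) defined by F[Φ](p) = Φ̂⁰(x - v(p)·t + ∫φ(p-p')Φ(p')dp', p) is a strict contraction, and hence has a unique bounded fixed point. -/

import Mathlib

open MeasureTheory Real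
open scoped ENNReal

set_option maxHeartbeats 1000000

private lemma ghd_est (φ : ℝ → ℝ) (hφ : Integrable φ)
    (Φ₁ Φ₂ : ℝ → ℝ) (h₁ : Measurable Φ₁) (h₂ : Measurable Φ₂)
    (C₁ C₂ : ℝ) (hC₁ : ∀ p, |Φ₁ p| ≤ C₁) (hC₂ : ∀ p, |Φ₂ p| ≤ C₂)
    (M : ℝ) (hM : 0 ≤ M) (hMd : ∀ p', |Φ₁ p' - Φ₂ p'| ≤ M)
    (Phat : ℝ → ℝ → ℝ)
    (hPlip : ∀ p a b, |Phat a p - Phat b p| ≤ (1 / (2 * π)) * |a - b|)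
    (c : ℝ) (p : ℝ) :
    |Phat (c + ∫ p', φ (p - p') * Φ₁ p') p - Phat (c + ∫ p', φ (p - p') * Φ₂ p') p| ≤
      ((∫ q, |φ q|) / (2 * π)) * M := by
  have hφp : Integrable fun p' => φ (p - p') := hφ.comp_sub_left p
  have hi₁ : Integrable fun p' => φ (p - p') * Φ₁ p' := by
    have := hφp.bdd_mul (c := C₁) h₁.aestronglyMeasurable (Filter.Eventually.of_forall fun p' => by simpa using hC₁ p')
    simpa [mul_comm] using this
  have hi₂ : Integrable fun p' => φ (p - p') * Φ₂ p' := by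
    have := hφp.bdd_mul (c := C₂) h₂.aestronglyMeasurable (Filter.Eventually.of_forall fun p' => by simpa using hC₂ p')
    simpa [mul_comm] using this
  have key : |(∫ p', φ (p - p') * Φ₁ p') - ∫ p', φ (p - p') * Φ₂ p'| ≤ (∫ q, |φ q|) * M := by
    rw [← integral_sub hi₁ hi₂]
    have h1 : ∀ p', φ (p - p') * Φ₁ p' - φ (p - p') * Φ₂ p'
        = φ (p - p') * (Φ₁ p' - Φ₂ p') := fun p' => by ring
    simp_rw [h1]
    calc |∫ p', φ (p - p') * (Φ₁ p' - Φ₂ p')|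
        ≤ ∫ p', |φ (p - p')| * |Φ₁ p' - Φ₂ p'| := by
          simpa [abs_mul] using
            norm_integral_le_integral_norm (fun p' => φ (p - p') * (Φ₁ p' - Φ₂ p'))
      _ ≤ ∫ p', |φ (p - p')| * M := by
          refine integral_mono_of_nonneg
            (Filter.Eventually.of_forall fun p' => by positivity)
            (hφp.abs.mul_const M) (Filter.Eventually.of_forall fun p' => ?_)
          exact mul_le_mul_of_nonneg_left (hMd p') (abs_nonneg _)
      _ = (∫ q, |φ q|) * M := by
          rw [integral_mul_const]
          congr 1
          exact integral_sub_left_eq_self (fun q => |φ q|) volume p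
  have hπ : (0:ℝ) < 2 * π := by positivity
  calc |Phat (c + ∫ p', φ (p - p') * Φ₁ p') p - Phat (c + ∫ p', φ (p - p') * Φ₂ p') p|
      ≤ (1 / (2 * π)) * |(c + ∫ p', φ (p - p') * Φ₁ p') - (c + ∫ p', φ (p - p') * Φ₂ p')| :=
        hPlip p _ _
    _ = (1 / (2 * π)) * |(∫ p', φ (p - p') * Φ₁ p') - ∫ p', φ (p - p') * Φ₂ p'| := by
        have h2 : (c + ∫ p', φ (p - p') * Φ₁ p') - (c + ∫ p', φ (p - p') * Φ₂ p')
            = (∫ p', φ (p - p') * Φ₁ p') - ∫ p', φ (p - p') * Φ₂ p' := by ring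
        rw [h2]
    _ ≤ (1 / (2 * π)) * ((∫ q, |φ q|) * M) :=
        mul_le_mul_of_nonneg_left key (by positivity)
    _ = ((∫ q, |φ q|) / (2 * π)) * M := by ring

private lemma ghd_meas (t x : ℝ) (v : ℝ → ℝ) (hv : Measurable v)
    (Phat : ℝ → ℝ → ℝ) (hPmeas : Measurable (Function.uncurry Phat))
    (φ : ℝ → ℝ) (hφ : Integrable φ)
    (Φ : ℝ → ℝ) (hΦ : Measurable Φ) :
    Measurable fun p => Phat (x - v p * t + ∫ p', φ (p - p') * Φ p') p := by
  set ψ := hφ.1.mk φ with hψ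
  have hψm : StronglyMeasurable ψ := hφ.1.stronglyMeasurable_mk
  have hφψ : φ =ᵐ[volume] ψ := hφ.1.ae_eq_mk
  have heq : ∀ p, (∫ p', φ (p - p') * Φ p') = ∫ p', ψ (p - p') * Φ p' := by
    intro p
    refine integral_congr_ae ?_
    have hmp : MeasurePreserving (fun p' : ℝ => p - p') volume volume :=
      Measure.measurePreserving_sub_left volume p
    exact (hmp.quasiMeasurePreserving.ae_eq_comp hφψ).mul (Filter.EventuallyEq.refl _ _)
  have hI : Measurable fun p => ∫ p', φ (p - p') * Φ p' := by
    simp_rw [heq]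
    have hum : StronglyMeasurable (Function.uncurry fun p p' => ψ (p - p') * Φ p') := by
      exact ((hψm.measurable.comp measurable_sub).mul (hΦ.comp measurable_snd)).stronglyMeasurable
    exact hum.integral_prod_right.measurable
  have hrw : (fun p => Phat (x - v p * t + ∫ p', φ (p - p') * Φ p') p)
      = fun p => Function.uncurry Phat (x - v p * t + ∫ p', φ (p - p') * Φ p', p) := rfl
  rw [hrw]
  exact hPmeas.comp (((measurable_const.sub (hv.mul_const t)).add hI).prodMk measurable_id)

set_option synthInstance.maxHeartbeats 1000000 in
/-- The GHD space-time quadrature map `F[Φ](p) = Φ̂⁰(x - v(p)t + ∫φ(p-p')Φ(p')dp', p)` is a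
strict contraction on bounded measurable functions (Lipschitz constant `(∫|φ|)/(2π) < 1`),
and hence has a unique bounded measurable fixed point. -/
theorem stmt_6 (t x : ℝ) (v : ℝ → ℝ) (hv : Measurable v)
    (Phat : ℝ → ℝ → ℝ)
    (hPmeas : Measurable (Function.uncurry Phat))
    (hPbdd : ∃ C, ∀ a p, |Phat a p| ≤ C)
    (hPlip : ∀ p a b, |Phat a p - Phat b p| ≤ (1 / (2 * π)) * |a - b|)
    (φ : ℝ → ℝ) (hφ : Integrable φ) (hφlt : (∫ q, |φ q|) < 2 * π) :
    (∀ Φ₁ Φ₂ : ℝ → ℝ, Measurable Φ₁ → Measurable Φ₂ →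
      (∃ C, ∀ p, |Φ₁ p| ≤ C) → (∃ C, ∀ p, |Φ₂ p| ≤ C) →
      ∀ p : ℝ, |Phat (x - v p * t + ∫ p', φ (p - p') * Φ₁ p') p -
            Phat (x - v p * t + ∫ p', φ (p - p') * Φ₂ p') p| ≤
        ((∫ q, |φ q|) / (2 * π)) * ⨆ p' : ℝ, |Φ₁ p' - Φ₂ p'|) ∧
    (∃! Φ : {g : ℝ → ℝ // Measurable g ∧ ∃ C, ∀ p, |g p| ≤ C},
      ∀ p : ℝ, (Φ : ℝ → ℝ) p =
        Phat (x - v p * t + ∫ p', φ (p - p') * (Φ : ℝ → ℝ) p') p) := by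
  obtain ⟨C₀, hC₀⟩ := hPbdd
  have hφnn : (0:ℝ) ≤ ∫ q, |φ q| := integral_nonneg fun q => abs_nonneg _
  have hπ : (0:ℝ) < 2 * π := by positivity
  -- part 1
  have part1 : ∀ Φ₁ Φ₂ : ℝ → ℝ, Measurable Φ₁ → Measurable Φ₂ →
      (∃ C, ∀ p, |Φ₁ p| ≤ C) → (∃ C, ∀ p, |Φ₂ p| ≤ C) →
      ∀ p : ℝ, |Phat (x - v p * t + ∫ p', φ (p - p') * Φ₁ p') p -
            Phat (x - v p * t + ∫ p', φ (p - p') * Φ₂ p') p| ≤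
        ((∫ q, |φ q|) / (2 * π)) * ⨆ p' : ℝ, |Φ₁ p' - Φ₂ p'| := by
    rintro Φ₁ Φ₂ h₁ h₂ ⟨C₁, hC₁⟩ ⟨C₂, hC₂⟩ p
    have hbdd : BddAbove (Set.range fun p' => |Φ₁ p' - Φ₂ p'|) := by
      refine ⟨C₁ + C₂, ?_⟩
      rintro _ ⟨p', rfl⟩
      calc |Φ₁ p' - Φ₂ p'| ≤ |Φ₁ p'| + |Φ₂ p'| := abs_sub _ _
        _ ≤ C₁ + C₂ := add_le_add (hC₁ p') (hC₂ p')
    have hMd : ∀ p', |Φ₁ p' - Φ₂ p'| ≤ ⨆ p' : ℝ, |Φ₁ p' - Φ₂ p'| :=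
      fun p' => le_ciSup hbdd p'
    have hM : (0:ℝ) ≤ ⨆ p' : ℝ, |Φ₁ p' - Φ₂ p'| := le_trans (abs_nonneg _) (hMd 0)
    exact ghd_est φ hφ Φ₁ Φ₂ h₁ h₂ C₁ C₂ hC₁ hC₂ _ hM hMd Phat hPlip _ p
  refine ⟨part1, ?_⟩
  -- the complete space of bounded measurable functions
  set S : Set (lp (fun _ : ℝ => ℝ) ∞) :=
    {f : lp (fun _ : ℝ => ℝ) ∞ | Measurable (⇑f : ℝ → ℝ)} with hS
  have hSclosed : IsClosed S := by
    rw [← isSeqClosed_iff_isClosed]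
    intro u f hu huf
    have : ∀ p : ℝ, Filter.Tendsto (fun n => (u n : ℝ → ℝ) p) Filter.atTop (nhds (f p)) := by
      intro p
      have hb : ∀ n, dist ((u n : ℝ → ℝ) p) ((f : ℝ → ℝ) p) ≤ dist (u n) f := by
        intro n
        have h1 : ‖(u n - f : lp (fun _ : ℝ => ℝ) ∞) p‖ ≤ ‖u n - f‖ :=
          lp.norm_apply_le_norm ENNReal.top_ne_zero (u n - f) p
        rw [dist_eq_norm, dist_eq_norm]
        simpa using h1
      have hd : Filter.Tendsto (fun n => dist (u n) f) Filter.atTop (nhds 0) :=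
        tendsto_iff_dist_tendsto_zero.mp huf
      rw [tendsto_iff_dist_tendsto_zero]
      exact squeeze_zero (fun n => dist_nonneg) hb hd
    exact measurable_of_tendsto_metrizable (fun n => hu n)
      (tendsto_pi_nhds.mpr this)
  haveI : CompleteSpace S := hSclosed.completeSpace_coe
  haveI : Nonempty S := ⟨⟨0, by
    show Measurable (⇑(0 : lp (fun _ : ℝ => ℝ) ∞))
    rw [lp.coeFn_zero]
    exact measurable_const⟩⟩
  -- the contraction map
  have hbddF : ∀ (Φ : ℝ → ℝ),
      Memℓp (fun p => Phat (x - v p * t + ∫ p', φ (p - p') * Φ p') p) ∞ := by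
    intro Φ
    refine memℓp_infty ⟨C₀, ?_⟩
    rintro _ ⟨p, rfl⟩
    simpa using hC₀ _ p
  set T : S → S := fun f =>
    ⟨⟨fun p => Phat (x - v p * t + ∫ p', φ (p - p') * (f : lp (fun _ : ℝ => ℝ) ∞) p') p, hbddF _⟩,
      ghd_meas t x v hv Phat hPmeas φ hφ _ f.2⟩ with hT
  have hTapp : ∀ (f : S) (p : ℝ),
      ((T f : lp (fun _ : ℝ => ℝ) ∞) : ℝ → ℝ) p = Phat (x - v p * t + ∫ p', φ (p - p') * (f : lp (fun _ : ℝ => ℝ) ∞) p') p :=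
    fun f p => rfl
  have hSbdd : ∀ (f : S) (p : ℝ), |((f : lp (fun _ : ℝ => ℝ) ∞) : ℝ → ℝ) p| ≤ ‖(f : lp (fun _ : ℝ => ℝ) ∞)‖ := by
    intro f p
    simpa using lp.norm_apply_le_norm ENNReal.top_ne_zero (f : lp (fun _ : ℝ => ℝ) ∞) p
  set K : NNReal := Real.toNNReal ((∫ q, |φ q|) / (2 * π)) with hK
  have hKcoe : (K : ℝ) = (∫ q, |φ q|) / (2 * π) :=
    Real.coe_toNNReal _ (by positivity)
  have hKlt : K < 1 := by
    rw [← NNReal.coe_lt_coe, hKcoe, NNReal.coe_one, div_lt_one hπ]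
    exact hφlt
  have hTlip : LipschitzWith K T := by
    refine LipschitzWith.of_dist_le_mul fun f g => ?_
    rw [Subtype.dist_eq, Subtype.dist_eq, dist_eq_norm, dist_eq_norm]
    have hnn : (0:ℝ) ≤ (K : ℝ) * ‖(f : lp (fun _ : ℝ => ℝ) ∞) - (g : lp (fun _ : ℝ => ℝ) ∞)‖ := by positivity
    refine lp.norm_le_of_forall_le hnn fun p => ?_
    have hpt : |((T f : lp (fun _ : ℝ => ℝ) ∞) : ℝ → ℝ) p - ((T g : lp (fun _ : ℝ => ℝ) ∞) : ℝ → ℝ) p| ≤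
        ((∫ q, |φ q|) / (2 * π)) * ‖(f : lp (fun _ : ℝ => ℝ) ∞) - (g : lp (fun _ : ℝ => ℝ) ∞)‖ := by
      rw [hTapp, hTapp]
      refine ghd_est φ hφ _ _ f.2 g.2 ‖(f : lp (fun _ : ℝ => ℝ) ∞)‖ ‖(g : lp (fun _ : ℝ => ℝ) ∞)‖ (hSbdd f) (hSbdd g)
        _ (norm_nonneg _) (fun p' => ?_) Phat hPlip _ p
      have := lp.norm_apply_le_norm ENNReal.top_ne_zero ((f : lp (fun _ : ℝ => ℝ) ∞) - (g : lp (fun _ : ℝ => ℝ) ∞)) p'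
      simpa using this
    calc ‖((T f : lp (fun _ : ℝ => ℝ) ∞) - (T g : lp (fun _ : ℝ => ℝ) ∞)) p‖ = |((T f : lp (fun _ : ℝ => ℝ) ∞) : ℝ → ℝ) p - ((T g : lp (fun _ : ℝ => ℝ) ∞) : ℝ → ℝ) p| := by
          simp [Real.norm_eq_abs]
      _ ≤ (K : ℝ) * ‖(f : lp (fun _ : ℝ => ℝ) ∞) - (g : lp (fun _ : ℝ => ℝ) ∞)‖ := by
          rw [hKcoe]; exact hpt
  have hcontr : ContractingWith K T := ⟨hKlt, hTlip⟩
  set Φ₀ : S := hcontr.fixedPoint T with hΦ₀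
  have hfix : T Φ₀ = Φ₀ := hcontr.fixedPoint_isFixedPt
  set Φfun : ℝ → ℝ := ((Φ₀ : lp (fun _ : ℝ => ℝ) ∞) : ℝ → ℝ) with hΦfun
  have hΦmeas : Measurable Φfun := Φ₀.2
  have hΦbdd : ∀ p, |Φfun p| ≤ ‖(Φ₀ : lp (fun _ : ℝ => ℝ) ∞)‖ := hSbdd Φ₀
  have hΦeq : ∀ p : ℝ, Φfun p = Phat (x - v p * t + ∫ p', φ (p - p') * Φfun p') p := by
    intro p
    have h0 := hTapp Φ₀ p
    rw [hfix] at h0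
    exact h0
  refine ⟨⟨Φfun, hΦmeas, ‖(Φ₀ : lp (fun _ : ℝ => ℝ) ∞)‖, hΦbdd⟩, hΦeq, ?_⟩
  -- uniqueness
  rintro ⟨Ψ, hΨmeas, CΨ, hΨbdd⟩ hΨeq
  refine Subtype.ext ?_
  show Ψ = Φfun
  have hDbdd : BddAbove (Set.range fun p' => |Ψ p' - Φfun p'|) := by
    refine ⟨CΨ + ‖(Φ₀ : lp (fun _ : ℝ => ℝ) ∞)‖, ?_⟩
    rintro _ ⟨p', rfl⟩
    calc |Ψ p' - Φfun p'| ≤ |Ψ p'| + |Φfun p'| := abs_sub _ _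
      _ ≤ CΨ + ‖(Φ₀ : lp (fun _ : ℝ => ℝ) ∞)‖ := add_le_add (hΨbdd p') (hΦbdd p')
  set D : ℝ := ⨆ p' : ℝ, |Ψ p' - Φfun p'| with hD
  have hDub : ∀ p', |Ψ p' - Φfun p'| ≤ D := fun p' => le_ciSup hDbdd p'
  have hDnn : (0:ℝ) ≤ D := le_trans (abs_nonneg _) (hDub 0)
  have hpt : ∀ p, |Ψ p - Φfun p| ≤ ((∫ q, |φ q|) / (2 * π)) * D := by
    intro p
    have hΨeq' : ∀ p : ℝ, Ψ p = Phat (x - v p * t + ∫ p', φ (p - p') * Ψ p') p := hΨeq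
    rw [hΨeq' p, hΦeq p]
    exact part1 Ψ Φfun hΨmeas hΦmeas ⟨CΨ, hΨbdd⟩ ⟨‖(Φ₀ : lp (fun _ : ℝ => ℝ) ∞)‖, hΦbdd⟩ p
  have hDle : D ≤ ((∫ q, |φ q|) / (2 * π)) * D := ciSup_le hpt
  have hk1 : (∫ q, |φ q|) / (2 * π) < 1 := (div_lt_one hπ).mpr hφlt
  have hD0 : D = 0 := by nlinarith
  funext p
  have h1 : |Ψ p - Φfun p| ≤ 0 := by
    have := hpt p
    rw [hD0, mul_zero] at this
    exact this
  exact sub_eq_zero.mp (abs_nonpos_iff.mp h1)
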